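/- Let Σ be a type, w : ℕ → Option Σ, ζ : Σ, u : ℕ, and let w' := Function.update w u (some ζ). Suppose there are positions with x_o ≤ v₁, v₁ ⤳_{w'} u, u < y_o, y_o ≤ v₂, v₂ ⤳_{w'} y_c, such that w' y_c = some ζ and w[x_o,v₁] = w[y_o,v₂]. Then w'[x_o,u] = w'[y_o,y_c]. (Case 3.3 of the proof of Lemma 3.4 of the paper: insertion at the right endpoint of the first interval, matching the symbol at the right endpoint of the second interval.) -/

import Mathlib

/-- `y` carries the next symbol after `x` in the partial word `w`. -/
def Nxt {α : Type*} (w : ℕ → Option α) (x y : ℕ) : Prop :=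
  w x ≠ none ∧ w y ≠ none ∧ x < y ∧ ∀ z, x < z → z < y → w z = none

/-- The subword of `w` between positions `i` and `j` (inclusive). -/
def subword {α : Type*} (w : ℕ → Option α) (i j : ℕ) : List α :=
  (List.range' i (j + 1 - i)).filterMap w

lemma subword_self {α : Type*} (w : ℕ → Option α) (j : ℕ) :
    subword w j j = (w j).toList := by
  have h : j + 1 - j = 1 := by omega
  unfold subword
  rw [h, List.range'_one]
  cases hwj : w j <;> simp [List.filterMap_cons, hwj]

lemma subword_split {α : Type*} (w : ℕ → Option α) {i k j : ℕ}
    (h1 : i ≤ k) (h2 : k < j) :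
    subword w i j = subword w i k ++ subword w (k + 1) j := by
  unfold subword
  rw [← List.filterMap_append]
  congr 1
  have := @List.range'_append i (k + 1 - i) (j - k) 1
  have e1 : i + 1 * (k + 1 - i) = k + 1 := by omega
  have e2 : k + 1 - i + (j - k) = j + 1 - i := by omega
  have e3 : j + 1 - (k + 1) = j - k := by omega
  rw [e1, e2] at this
  rw [e3, ← this]

lemma subword_none_left {α : Type*} (w : ℕ → Option α) {i j : ℕ}
    (hij : i ≤ j) (h : ∀ z, i ≤ z → z < j → w z = none) :
    subword w i j = subword w j j := by
  obtain ⟨n, hn⟩ : ∃ n, j - i = n := ⟨j - i, rfl⟩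
  induction n generalizing i with
  | zero =>
    have : i = j := by omega
    rw [this]
  | succ n ih =>
    have hij' : i < j := by omega
    have : subword w i j = subword w i i ++ subword w (i + 1) j :=
      subword_split w le_rfl hij'
    rw [this, subword_self, h i le_rfl hij']
    simp
    exact ih (by omega) (fun z hz hz' => h z (by omega) hz') (by omega)

lemma subword_update_of_gt {α : Type*} (w : ℕ → Option α) (ζ : α) {u i j : ℕ}
    (h : ∀ z, i ≤ z → z ≤ j → z ≠ u) :
    subword (Function.update w u (some ζ)) i j = subword w i j := by
  unfold subword
  apply List.filterMap_congr
  intro x hx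
  rw [List.mem_range'_1] at hx
  exact Function.update_of_ne (h x hx.1 (by omega)) _ _

theorem insertion_right_endpoint_case {α : Type*} (w : ℕ → Option α) (ζ : α)
    (u xo yo yc v₁ v₂ : ℕ)
    (h₁ : xo ≤ v₁) (hn₁ : Nxt (Function.update w u (some ζ)) v₁ u) (h₂ : u < yo)
    (h₃ : yo ≤ v₂) (hn₂ : Nxt (Function.update w u (some ζ)) v₂ yc)
    (hy : (Function.update w u (some ζ)) yc = some ζ)
    (heq : subword w xo v₁ = subword w yo v₂) :
    subword (Function.update w u (some ζ)) xo u =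
      subword (Function.update w u (some ζ)) yo yc := by
  set w' := Function.update w u (some ζ) with hw'
  have hv₁u : v₁ < u := hn₁.2.2.1
  have hv₂yc : v₂ < yc := hn₂.2.2.1
  have lhs : subword w' xo u = subword w xo v₁ ++ [ζ] := by
    rw [subword_split w' h₁ hv₁u,
        subword_none_left w' (by omega) (fun z hz hz' => hn₁.2.2.2 z (by omega) hz'),
        subword_self, subword_update_of_gt w ζ (fun z hz hz' => by omega)]
    simp [hw', Function.update_self]
  have rhs : subword w' yo yc = subword w yo v₂ ++ [ζ] := by
    rw [subword_split w' h₃ hv₂yc,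
        subword_none_left w' (by omega) (fun z hz hz' => hn₂.2.2.2 z (by omega) hz'),
        subword_self, subword_update_of_gt w ζ (fun z hz hz' => by omega)]
    simp [hy]
  rw [lhs, rhs, heq]
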